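/- Let a ≥ b ≥ 1 be integers such that the pair (a,b) is neither James nor pointed, and let u be a non-null universal p-ary design for (a,b) with coefficient sequence (μ_0,…,μ_{b−1}). Then u is similar to the constant design: there exists α ∈ k such that μ_j = α·C(a+b−j, b−j) in k for all 0 ≤ j < b. -/

import Mathlib

open Finset

section LucasTools
variable {p : ℕ} (hp : p.Prime)
include hp

lemma lucas_dvd_iff (n j : ℕ) :
    p ∣ n.choose j ↔ p ∣ (n % p).choose (j % p) ∨ p ∣ (n / p).choose (j / p) := by
  haveI : Fact p.Prime := ⟨hp⟩
  have h := Choose.choose_modEq_choose_mod_mul_choose_div_nat (p := p) (n := n) (k := j)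
  rw [Nat.ModEq] at h
  rw [Nat.dvd_iff_mod_eq_zero, h, ← Nat.dvd_iff_mod_eq_zero, hp.dvd_mul]

lemma lucas_not_dvd {n j : ℕ} (h1 : ¬ p ∣ (n % p).choose (j % p))
    (h2 : ¬ p ∣ (n / p).choose (j / p)) : ¬ p ∣ n.choose j := by
  rw [lucas_dvd_iff hp]; tauto

lemma not_dvd_choose_of_lt {n j : ℕ} (hn : n < p) (hj : j ≤ n) : ¬ p ∣ n.choose j := by
  intro hdvd
  have hfac : p ∣ Nat.factorial n := by
    have h := Nat.choose_mul_factorial_mul_factorial hj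
    exact h ▸ Dvd.dvd.mul_right (hdvd.mul_right _) _
  exact absurd (hp.dvd_factorial.mp hfac) (by omega)

lemma not_dvd_choose_pow_mul (e : ℕ) {n j : ℕ} (h : ¬ p ∣ n.choose j) :
    ¬ p ∣ (p ^ e * n).choose (p ^ e * j) := by
  induction e with
  | zero => simpa using h
  | succ e ih =>
    have hp0 : 0 < p := hp.pos
    have hn : p ^ (e+1) * n = p * (p ^ e * n) := by ring
    have hj : p ^ (e+1) * j = p * (p ^ e * j) := by ring
    rw [hn, hj]
    apply lucas_not_dvd hp
    · rw [Nat.mul_mod_right, Nat.mul_mod_right, Nat.choose_self]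
      exact hp.not_dvd_one
    · rw [Nat.mul_div_cancel_left _ hp0, Nat.mul_div_cancel_left _ hp0]
      exact ih

lemma not_dvd_choose_mod (m : ℕ) : ∀ n : ℕ, ¬ p ∣ n.choose (n % p ^ m) := by
  induction m with
  | zero => intro n; simpa [Nat.mod_one] using hp.not_dvd_one
  | succ m ih =>
    intro n
    apply lucas_not_dvd hp
    · rw [Nat.mod_mod_of_dvd _ (dvd_pow_self p (Nat.succ_ne_zero m)), Nat.choose_self]
      exact hp.not_dvd_one
    · have h : n % p ^ (m+1) / p = n / p % p ^ m := by
        rw [← Nat.mod_mul_right_div_self, ← pow_succ']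
      rw [h]
      exact ih (n / p)

lemma not_dvd_choose_pow (m : ℕ) : ∀ n : ℕ, ¬ p ∣ n / p ^ m → ¬ p ∣ n.choose (p ^ m) := by
  induction m with
  | zero => intro n h; simpa using h
  | succ m ih =>
    intro n h
    apply lucas_not_dvd hp
    · rw [Nat.pow_mod, Nat.mod_self, Nat.zero_pow (by omega), Nat.zero_mod,
        Nat.choose_zero_right]
      exact hp.not_dvd_one
    · rw [pow_succ, Nat.mul_div_cancel _ hp.pos]
      exact ih (n / p) (by rwa [Nat.div_div_eq_div_mul, ← pow_succ'])

lemma not_dvd_choose_low (m : ℕ) : ∀ n j : ℕ, n % p ^ m = p ^ m - 1 → j < p ^ m →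
    ¬ p ∣ n.choose j := by
  induction m with
  | zero =>
    intro n j _ hj
    have hj0 : j = 0 := by simpa using hj
    subst hj0
    simpa using hp.not_dvd_one
  | succ m ih =>
    intro n j hn hj
    have hp2 : 2 ≤ p := hp.two_le
    have hpm : 1 ≤ p ^ m := Nat.one_le_pow m p hp.pos
    have hps : p ^ (m+1) = p ^ m * p := pow_succ p m
    have hkey : p ^ (m+1) - 1 = p * (p ^ m - 1) + (p - 1) := by
      have h1 : p * (p ^ m - 1) = p ^ m * p - p := by
        rw [Nat.mul_sub, mul_one, mul_comm]
      have h2 : p ≤ p ^ m * p := Nat.le_mul_of_pos_left p hpm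
      omega
    apply lucas_not_dvd hp
    · have hnp : n % p = p - 1 := by
        rw [← Nat.mod_mod_of_dvd n (dvd_pow_self p (Nat.succ_ne_zero m)), hn, hkey,
          Nat.mul_add_mod, Nat.mod_eq_of_lt (by omega)]
      rw [hnp]
      exact not_dvd_choose_of_lt hp (by omega)
        (by have := Nat.mod_lt j hp.pos; omega)
    · apply ih
      · rw [← Nat.mod_mul_right_div_self, ← pow_succ', hn, hkey,
          Nat.mul_add_div hp.pos, Nat.div_eq_of_lt (by omega), Nat.add_zero]
      · rw [Nat.div_lt_iff_lt_mul hp.pos]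
        omega

end LucasTools

lemma count_between {γ : Type*} [DecidableEq γ] [Fintype γ] (Z X : Finset γ) (hZX : Z ⊆ X)
    (t : ℕ) (hst : Z.card ≤ t) :
    (univ.filter fun Y : Finset γ => Y.card = t ∧ Z ⊆ Y ∧ Y ⊆ X).card
      = (X.card - Z.card).choose (t - Z.card) := by
  classical
  rw [← Finset.card_sdiff_of_subset hZX, ← Finset.card_powersetCard]
  apply Finset.card_bij' (fun Y _ => Y \ Z) (fun A _ => A ∪ Z)
  · intro Y hY
    simp only [mem_filter, mem_univ, true_and] at hY
    rw [Finset.mem_powersetCard]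
    exact ⟨Finset.sdiff_subset_sdiff hY.2.2 le_rfl,
      by rw [Finset.card_sdiff_of_subset hY.2.1, hY.1]⟩
  · intro A hA
    rw [Finset.mem_powersetCard] at hA
    have hdisj : Disjoint A Z := Finset.sdiff_disjoint.mono_left hA.1
    simp only [mem_filter, mem_univ, true_and]
    refine ⟨?_, Finset.subset_union_right, ?_⟩
    · rw [Finset.card_union_of_disjoint hdisj, hA.2, Nat.sub_add_cancel hst]
    · exact Finset.union_subset (hA.1.trans Finset.sdiff_subset) hZX
  · intro Y hY
    simp only [mem_filter, mem_univ, true_and] at hY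
    exact Finset.sdiff_union_of_subset hY.2.1
  · intro A hA
    rw [Finset.mem_powersetCard] at hA
    exact Finset.union_sdiff_cancel_right (Finset.sdiff_disjoint.mono_left hA.1)

lemma design_relation {k : Type*} [Field k] (a b : ℕ)
    (u : Finset (Fin (a + b)) → k) (μ : ℕ → k)
    (hu : ∀ t < b, ∀ Y : Finset (Fin (a + b)), Y.card = t →
        ∑ X ∈ univ.filter (fun X : Finset (Fin (a + b)) => X.card = b ∧ Y ⊆ X), u X = μ t)
    {s t : ℕ} (hst : s < t) (htb : t < b) :
    (Nat.choose (a + b - s) (t - s) : k) * μ t = (Nat.choose (b - s) (t - s) : k) * μ s := by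
  classical
  obtain ⟨Z, -, hZcard⟩ := Finset.exists_subset_card_eq (s := (univ : Finset (Fin (a + b)))) (n := s)
    (by rw [Finset.card_univ, Fintype.card_fin]; omega)
  have key := Finset.sum_comm'
    (s := univ.filter fun Y : Finset (Fin (a + b)) => Y.card = t ∧ Z ⊆ Y)
    (t := fun Y => univ.filter fun X : Finset (Fin (a + b)) => X.card = b ∧ Y ⊆ X)
    (t' := univ.filter fun X : Finset (Fin (a + b)) => X.card = b)
    (s' := fun X => univ.filter fun Y : Finset (Fin (a + b)) => Y.card = t ∧ Z ⊆ Y ∧ Y ⊆ X)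
    (f := fun _ X => u X)
    (by intro Y X; simp only [mem_filter, mem_univ, true_and]; tauto)
  rw [Finset.sum_congr rfl
    (fun Y hY => hu t htb Y (mem_filter.mp hY).2.1), Finset.sum_const] at key
  have hTcard : (univ.filter fun Y : Finset (Fin (a + b)) => Y.card = t ∧ Z ⊆ Y).card
      = (a + b - s).choose (t - s) := by
    have he : (univ.filter fun Y : Finset (Fin (a + b)) => Y.card = t ∧ Z ⊆ Y)
        = univ.filter fun Y : Finset (Fin (a + b)) => Y.card = t ∧ Z ⊆ Y ∧ Y ⊆ univ := by
      apply Finset.filter_congr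
      intro Y _
      simp [Finset.subset_univ]
    rw [he, count_between Z univ (Finset.subset_univ Z) t (by omega), hZcard,
      Finset.card_univ, Fintype.card_fin]
  rw [hTcard] at key
  rw [Finset.sum_congr rfl (fun X _ => Finset.sum_const (u X)
    (s := univ.filter fun Y : Finset (Fin (a + b)) => Y.card = t ∧ Z ⊆ Y ∧ Y ⊆ X))] at key
  have hsub : (univ.filter fun X : Finset (Fin (a + b)) => X.card = b ∧ Z ⊆ X)
      ⊆ univ.filter fun X : Finset (Fin (a + b)) => X.card = b := by
    intro X hX; simp only [mem_filter, mem_univ, true_and] at *; exact hX.1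
  rw [← Finset.sum_subset hsub (by
    intro X hX hX'
    simp only [mem_filter, mem_univ, true_and] at hX hX'
    have hempty : (univ.filter fun Y : Finset (Fin (a + b)) =>
        Y.card = t ∧ Z ⊆ Y ∧ Y ⊆ X) = ∅ := by
      rw [Finset.filter_eq_empty_iff]
      intro Y _
      rintro ⟨-, h1, h2⟩
      exact (by tauto : ¬ Z ⊆ X) (h1.trans h2)
    rw [hempty, Finset.card_empty, zero_smul])] at key
  rw [Finset.sum_congr rfl (fun X hX => by
    have hX' := mem_filter.mp hX
    rw [count_between Z X (hX'.2.2) t (by omega), hX'.2.1, hZcard])] at key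
  rw [← Finset.smul_sum, hu s (by omega) Z hZcard] at key
  rw [nsmul_eq_mul, nsmul_eq_mul] at key
  exact key


/-- Let `k` be a field of characteristic `p` and `a ≥ b ≥ 1` such
that `(a,b)` is neither James (`p^{l_p(b)} ∣ a + 1`) nor pointed (`b = p^β + b̂` with
`b̂ < p^{ν_p(a+1)} < b`).  Every non-null universal `p`-ary design for `(a,b)` with
coefficients `μ_0, …, μ_{b−1}` is similar to the constant design: there is `α ∈ k` with
`μ_j = α · C(a+b−j, b−j)` in `k` for all `j < b`. -/
theorem not_james_not_pointed_similar_to_constant (p : ℕ) (hp : p.Prime)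
    (k : Type*) [Field k] [CharP k p]
    (a b : ℕ) (hb : 1 ≤ b) (hab : b ≤ a)
    (hNotJames : ¬ p ^ Nat.log p b ∣ a + 1)
    (hNotPointed : ¬ ∃ β bhat : ℕ, b = p ^ β + bhat ∧
        bhat < p ^ padicValNat p (a + 1) ∧ p ^ padicValNat p (a + 1) < b)
    (u : Finset (Fin (a + b)) → k) (μ : ℕ → k)
    (hu : ∀ t < b, ∀ Y : Finset (Fin (a + b)), Y.card = t →
        ∑ X ∈ univ.filter (fun X : Finset (Fin (a + b)) => X.card = b ∧ Y ⊆ X), u X = μ t)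
    (hnonnull : ∃ t < b, μ t ≠ 0) :
    ∃ α : k, ∀ j < b, μ j = α * (Nat.choose (a + b - j) (b - j) : k) := by
  classical
  haveI : Fact p.Prime := ⟨hp⟩
  set m := padicValNat p (a + 1) with hm_def
  set q := p ^ m with hq_def
  have ha1 : a + 1 ≠ 0 := by omega
  have hqdvd : q ∣ a + 1 := pow_padicValNat_dvd
  set w := (a + 1) / q with hw_def
  have hqw : q * w = a + 1 := Nat.mul_div_cancel' hqdvd
  have hw : ¬ p ∣ w := by
    intro hdvd
    have h8 : p ^ (m + 1) = q * p := by rw [hq_def, pow_succ]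
    exact pow_succ_padicValNat_not_dvd ha1
      (by rw [h8, ← hqw]; exact mul_dvd_mul_left q hdvd)
  have hp2 : 2 ≤ p := hp.two_le
  have hq1 : 1 ≤ q := Nat.one_le_pow _ _ hp.pos
  have hmlog : m < Nat.log p b := by
    by_contra hcon
    push_neg at hcon
    exact hNotJames ((pow_dvd_pow p hcon).trans hqdvd)
  have hqpb : q * p ≤ b := by
    calc q * p = p ^ (m + 1) := by rw [hq_def, pow_succ]
    _ ≤ p ^ Nat.log p b := Nat.pow_le_pow_right hp.pos (by omega)
    _ ≤ b := Nat.pow_log_le_self p (by omega)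
  have hqb : q < b := by nlinarith
  have hunit : ∀ {n : ℕ}, ¬ p ∣ n → (n : k) ≠ 0 :=
    fun {n} h h0 => h ((CharP.cast_eq_zero_iff k p _).mp h0)
  have hrel : ∀ s t : ℕ, s < t → t < b →
      ((a + b - s).choose (t - s) : k) * μ t = ((b - s).choose (t - s) : k) * μ s :=
    fun s t h1 h2 => design_relation a b u μ hu h1 h2
  set c : ℕ → k := fun j => ((a + b - j).choose (b - j) : k) with hc_def
  have hCid : ∀ s t : ℕ, s < t → t < b →
      ((a + b - s).choose (t - s) : k) * c t = ((b - s).choose (t - s) : k) * c s := by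
    intro s t h1 h2
    have hnat := Nat.choose_mul (n := a + b - s) (k := b - s) (s := t - s)
      (by omega)
    have e1 : a + b - s - (t - s) = a + b - t := by omega
    have e2 : b - s - (t - s) = b - t := by omega
    rw [e1, e2] at hnat
    have hcast := congrArg (fun n : ℕ => (n : k)) hnat
    push_cast at hcast
    simp only [hc_def]
    linear_combination -hcast
  have hCaq : ¬ p ∣ (a + q).choose q := by
    rw [hq_def]
    apply not_dvd_choose_pow hp m
    have hdiv : (a + q) / q = w := by
      have he : a + q = q * w + (q - 1) := by omega
      rw [he, Nat.mul_add_div (by omega), Nat.div_eq_of_lt (by omega), Nat.add_zero]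
    rw [← hq_def, hdiv]
    exact hw
  set α : k := μ (b - q) * (((a + q).choose q : k))⁻¹ with hα_def
  set ν : ℕ → k := fun j => μ j - α * c j with hν_def
  have hνrel : ∀ s t : ℕ, s < t → t < b →
      ((a + b - s).choose (t - s) : k) * ν t = ((b - s).choose (t - s) : k) * ν s := by
    intro s t h1 h2
    have h3 := hrel s t h1 h2
    have h4 := hCid s t h1 h2
    simp only [hν_def]
    linear_combination h3 - α * h4
  have hbase : ν (b - q) = 0 := by
    have e1 : a + b - (b - q) = a + q := by omega
    have e2 : b - (b - q) = q := by omega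
    simp only [hν_def, hc_def, e1, e2, hα_def]
    rw [mul_assoc, inv_mul_cancel₀ (hunit hCaq), mul_one, sub_self]
  have key : ∀ x : ℕ, 0 < x → x ≤ b → ν (b - x) = 0 := by
    intro x
    induction x using Nat.strong_induction_on with
    | _ x ih =>
    intro hx0 hxb
    rcases lt_trichotomy x q with hlt | heq | hgt
    · -- x < q
      have h := hνrel (b - q) (b - x) (by omega) (by omega)
      have e1 : a + b - (b - q) = a + q := by omega
      have e2 : (b - x) - (b - q) = q - x := by omega
      have e3 : b - (b - q) = q := by omega
      rw [e1, e2, e3, hbase, mul_zero] at h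
      have hcu : ¬ p ∣ (a + q).choose (q - x) := by
        rw [hq_def]
        apply not_dvd_choose_low hp m
        · rw [← hq_def]
          have he : a + q = q * w + (q - 1) := by omega
          rw [he, Nat.mul_add_mod, Nat.mod_eq_of_lt (by omega)]
        · omega
      exact (mul_eq_zero.mp h).resolve_left (hunit hcu)
    · rw [heq]; exact hbase
    · -- x > q
      by_cases hqx : q ∣ x
      · set N := x / q with hN_def
        have hxN : x = q * N := (Nat.mul_div_cancel' hqx).symm
        have hN2 : 2 ≤ N := by
          by_contra hcon
          push_neg at hcon
          interval_cases N <;> omega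
        have hNne : N ≠ 0 := by omega
        set g := padicValNat p N with hg_def
        have hpgdvd : p ^ g ∣ N := pow_padicValNat_dvd
        set N' := N / p ^ g with hN'_def
        have hgN : p ^ g * N' = N := Nat.mul_div_cancel' hpgdvd
        have hN'nd : ¬ p ∣ N' := by
          intro hdvd
          have h8 : p ^ (g + 1) = p ^ g * p := pow_succ p g
          exact pow_succ_padicValNat_not_dvd hNne
            (by rw [h8, ← hgN]; exact mul_dvd_mul_left _ hdvd)
        have hN'pos : 0 < N' := by
          rcases Nat.eq_zero_or_pos N' with h0 | h
          · rw [h0, mul_zero] at hgN; omega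
          · exact h
        have hpg1 : 1 ≤ p ^ g := Nat.one_le_pow _ _ hp.pos
        by_cases hN'1 : N' = 1
        · -- x = q * p^g with g ≥ 1
          have hg1 : 1 ≤ g := by
            by_contra h0
            have hg0 : g = 0 := by omega
            rw [hg0, pow_zero, one_mul] at hgN
            omega
          have hxq' : x = q * p ^ g := by rw [hxN, ← hgN, hN'1, mul_one]
          have hxpow : x = p ^ (m + g) := by rw [hxq', hq_def, ← pow_add]
          have hpg2 : 2 ≤ p ^ g := by
            calc 2 = 2 ^ 1 := rfl
            _ ≤ p ^ g := Nat.pow_le_pow_left hp2 1 |>.trans (Nat.pow_le_pow_right hp.pos hg1) |>.trans le_rfl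
          have hxq : x + q ≤ b := by
            by_contra hcon
            push_neg at hcon
            exact hNotPointed ⟨m + g, b - x, by rw [← hxpow]; omega, by omega, by omega⟩
          have hstepY : ν (b - (x + q)) = 0 := by
            have h := hνrel (b - (x + q)) (b - q) (by omega) (by omega)
            have e1 : a + b - (b - (x + q)) = a + (x + q) := by omega
            have e2 : (b - q) - (b - (x + q)) = x := by omega
            have e3 : b - (b - (x + q)) = x + q := by omega
            rw [e1, e2, e3, hbase, mul_zero] at h
            have hcu : ¬ p ∣ (x + q).choose x := by
              have e4 : x + q = p ^ m * (p ^ g + 1) := by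
                rw [Nat.mul_add, mul_one, ← hq_def, ← hxq']
              have e5 : x = p ^ m * p ^ g := by rw [hxq', hq_def]
              rw [e4, e5]
              apply not_dvd_choose_pow_mul hp
              apply not_dvd_choose_pow hp g
              have : (p ^ g + 1) / p ^ g = 1 := by
                rw [Nat.add_div_left _ (by omega), Nat.div_eq_of_lt (by omega)]
              rw [this]
              exact hp.not_dvd_one
            exact (mul_eq_zero.mp h.symm).resolve_left (hunit hcu)
          have h := hνrel (b - (x + q)) (b - x) (by omega) (by omega)
          have e1 : a + b - (b - (x + q)) = a + (x + q) := by omega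
          have e2 : (b - x) - (b - (x + q)) = q := by omega
          have e3 : b - (b - (x + q)) = x + q := by omega
          rw [e1, e2, e3, hstepY, mul_zero] at h
          have hcu : ¬ p ∣ (a + (x + q)).choose q := by
            rw [hq_def]
            apply not_dvd_choose_pow hp m
            rw [← hq_def]
            have e4 : a + (x + q) = q * (w + p ^ g) + (q - 1) := by
              have h5 : q * (w + p ^ g) = q * w + q * p ^ g := Nat.mul_add q w (p ^ g)
              omega
            rw [e4, Nat.mul_add_div (by omega), Nat.div_eq_of_lt (by omega), Nat.add_zero]
            intro hdvd
            have hppg : p ∣ p ^ g := dvd_pow_self p (by omega)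
            have h6 := Nat.dvd_sub hdvd hppg
            exact hw (by simpa using h6)
          exact (mul_eq_zero.mp h).resolve_left (hunit hcu)
        · -- N' ≥ 2
          have hN'2 : 2 ≤ N' := by omega
          set Q := q * p ^ g with hQ_def
          have hQpow : Q = p ^ (m + g) := by rw [hQ_def, hq_def, ← pow_add]
          have hQ1 : 0 < Q := by rw [hQ_def]; positivity
          have hxQ : x = Q * N' := by rw [hQ_def, mul_assoc, hgN, ← hxN]
          set d : ℕ := if N' < p then 1 else N' % p with hd_def
          have hd1 : 1 ≤ d := by
            rw [hd_def]; split
            · omega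
            · have : N' % p ≠ 0 := fun h0 => hN'nd (Nat.dvd_of_mod_eq_zero h0)
              omega
          have hdN : d < N' := by
            rw [hd_def]; split
            · omega
            · rename_i hge
              push_neg at hge
              have := Nat.mod_lt N' hp.pos
              omega
          have hcu : ¬ p ∣ N'.choose d := by
            rw [hd_def]; split
            · rw [Nat.choose_one_right]; exact hN'nd
            · have h7 := not_dvd_choose_mod hp 1 N'
              rwa [pow_one] at h7
          have hQd : 0 < Q * d ∧ Q * d < x := by
            constructor
            · exact Nat.mul_pos hQ1 (by omega)
            · rw [hxQ]
              exact Nat.mul_lt_mul_of_pos_left hdN hQ1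
          have hνy := ih (x - Q * d) (by omega) (by omega) (by omega)
          have h := hνrel (b - x) (b - (x - Q * d)) (by omega) (by omega)
          have e1 : a + b - (b - x) = a + x := by omega
          have e2 : (b - (x - Q * d)) - (b - x) = Q * d := by omega
          have e3 : b - (b - x) = x := by omega
          rw [e1, e2, e3, hνy, mul_zero] at h
          have hcux : ¬ p ∣ x.choose (Q * d) := by
            rw [hxQ, hQpow]
            exact not_dvd_choose_pow_mul hp _ hcu
          exact (mul_eq_zero.mp h.symm).resolve_left (hunit hcux)
      · -- q ∤ x
        set r := x % q with hr_def
        have hr1 : 1 ≤ r := Nat.pos_of_ne_zero (fun h0 => hqx (Nat.dvd_of_mod_eq_zero h0))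
        have hrq : r < q := Nat.mod_lt x (by omega)
        have hνy := ih (x - r) (by omega) (by omega) (by omega)
        have h := hνrel (b - x) (b - (x - r)) (by omega) (by omega)
        have e2 : (b - (x - r)) - (b - x) = r := by omega
        have e3 : b - (b - x) = x := by omega
        rw [e2, e3, hνy, mul_zero] at h
        have hcux : ¬ p ∣ x.choose r := by
          rw [hr_def, hq_def]
          exact not_dvd_choose_mod hp m x
        exact (mul_eq_zero.mp h.symm).resolve_left (hunit hcux)
  refine ⟨α, fun j hj => ?_⟩
  have hkey := key (b - j) (by omega) (by omega)
  have e : b - (b - j) = j := by omega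
  rw [e] at hkey
  have h9 : μ j - α * c j = 0 := hkey
  have : μ j = α * c j := by linear_combination h9
  simpa [hc_def] using this
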